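/- Assume the stability condition P > xQ and fix s_Σ ∈ ℝ. Set ŝ = 2x·s_Σ + 2, r̂ = N and α = N(−2 + s_Σ·x)/(2(1 + (k₁ − k₂)²)·k₂²). Then there exist unique reals d₀, d₁ such that the function ψ defined with these constants satisfies ψ(t₋) = ψ(t₊) = 0; moreover, these unique d₀, d₁ automatically also satisfy ψ'(t₋) = 2t₋ and ψ'(t₊) = −2t₊. -/

import Mathlib

private lemma r32aux (c : ℝ) (hc : 0 ≤ c) : (c^2:ℝ) ^ ((3:ℝ)/2) = c^3 := by
  rw [← Real.rpow_natCast c 2, ← Real.rpow_mul hc,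
    show ((2:ℕ):ℝ) * (3/2) = ((3:ℕ):ℝ) by norm_num, Real.rpow_natCast]

private lemma r12aux (c : ℝ) (hc : 0 ≤ c) : (c^2:ℝ) ^ ((3:ℝ)/2 - 1) = c := by
  rw [← Real.rpow_natCast c 2, ← Real.rpow_mul hc,
    show ((2:ℕ):ℝ) * (3/2 - 1) = (1:ℝ) by norm_num, Real.rpow_one]

set_option maxHeartbeats 16000000 in
theorem smooth_momentum_profile_bvp
    (x k1 k2 θ N P Q C tm tp : ℝ)
    (hx : x ∈ Set.Ioo (0 : ℝ) 1) (hk1 : k1 < 0) (hk2 : k2 ≠ 0)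
    (hθ : θ ∈ Set.Ioo 0 Real.pi)
    (hN : N = Real.sqrt ((1 - k1 ^ 2 + k2 ^ 2) ^ 2 + 4 * k1 ^ 2))
    (hcos : Real.cos θ = (1 - k1 ^ 2 + k2 ^ 2) / N)
    (hsin : Real.sin θ = -(2 * k1) / N)
    (hP : P = 1 + (k1 + k2) ^ 2) (hQ : Q = 1 + (k1 - k2) ^ 2)
    (hC : C = 4 * k1 * k2 * (P - x ^ 2 * Q) / (x ^ 2 * N ^ 2))
    (htm : tm = (1 - x) / x) (htp : tp = (1 + x) / x)
    (hstab : P > x * Q)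
    (sS shat rhat alpha : ℝ)
    (hshat : shat = 2 * x * sS + 2) (hrhat : rhat = N)
    (halpha : alpha = N * (-2 + sS * x) / (2 * (1 + (k1 - k2) ^ 2) * k2 ^ 2))
    (ψ : ℝ → ℝ → ℝ → ℝ)
    (hψ : ψ = fun d0 d1 t => sS * t ^ 2
      + (alpha * Real.cos θ / (3 * Real.sin θ ^ 2) - (shat - alpha * rhat) / 6) * t ^ 3
      - (alpha / 3) * Real.sin θ * ((Real.cot θ ^ 2 + 1) * (t ^ 2 + C)) ^ ((3 : ℝ) / 2)
      + d0 + d1 * t) :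
    (∃! p : ℝ × ℝ, ψ p.1 p.2 tm = 0 ∧ ψ p.1 p.2 tp = 0) ∧
    (∀ d0 d1 : ℝ, ψ d0 d1 tm = 0 → ψ d0 d1 tp = 0 →
      deriv (ψ d0 d1) tm = 2 * tm ∧ deriv (ψ d0 d1) tp = -(2 * tp)) := by
  obtain ⟨hx0, hx1⟩ := hx
  have hxne : x ≠ 0 := ne_of_gt hx0
  have hk1ne : k1 ≠ 0 := ne_of_lt hk1
  have hNpos : 0 < N := by rw [hN]; exact Real.sqrt_pos.2 (by positivity)
  have hNne : N ≠ 0 := hNpos.ne'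
  have hNN : N ^ 2 = (1 + (k1 + k2) ^ 2) * (1 + (k1 - k2) ^ 2) := by
    rw [hN, Real.sq_sqrt (by positivity)]; ring
  have hL1 : (0:ℝ) < 1 + (k1 + k2) ^ 2 := by positivity
  have hL2 : (0:ℝ) < 1 + (k1 - k2) ^ 2 := by positivity
  have hsinpos : 0 < Real.sin θ := Real.sin_pos_of_pos_of_lt_pi hθ.1 hθ.2
  have hsinne : Real.sin θ ≠ 0 := hsinpos.ne'
  have hcot : Real.cot θ = (1 - k1 ^ 2 + k2 ^ 2) / (-(2 * k1)) := by
    rw [Real.cot_eq_cos_div_sin, hcos, hsin]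
    rw [div_div_div_cancel_right₀ hNne]
  have hK : Real.cot θ ^ 2 + 1 = N ^ 2 / (4 * k1 ^ 2) := by
    rw [hcot, hNN]; field_simp; ring
  have hstab' : x * (1 + (k1 - k2) ^ 2) < 1 + (k1 + k2) ^ 2 := by
    rw [hP, hQ] at hstab; linarith
  -- endpoint square roots
  have hden : 0 < -(2 * k1) * x := mul_pos (by linarith) hx0
  have hcm0 : 0 ≤ (1 + (k1 + k2) ^ 2 - x * (1 + (k1 - k2) ^ 2)) / (-(2 * k1) * x) :=
    div_nonneg (by linarith) hden.le
  have hcp0 : 0 ≤ (1 + (k1 + k2) ^ 2 + x * (1 + (k1 - k2) ^ 2)) / (-(2 * k1) * x) :=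
    div_nonneg (by nlinarith) hden.le
  have hEm : (Real.cot θ ^ 2 + 1) * (tm ^ 2 + C)
      = ((1 + (k1 + k2) ^ 2 - x * (1 + (k1 - k2) ^ 2)) / (-(2 * k1) * x)) ^ 2 := by
    rw [hK, htm, hC, hP, hQ, hNN]; field_simp; ring
  have hEp : (Real.cot θ ^ 2 + 1) * (tp ^ 2 + C)
      = ((1 + (k1 + k2) ^ 2 + x * (1 + (k1 - k2) ^ 2)) / (-(2 * k1) * x)) ^ 2 := by
    rw [hK, htp, hC, hP, hQ, hNN]; field_simp; ring
  -- value lemma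
  have hval : ∀ d0 d1 t c : ℝ, 0 ≤ c → (Real.cot θ ^ 2 + 1) * (t ^ 2 + C) = c ^ 2 →
      ψ d0 d1 t = sS * t ^ 2
        + (alpha * Real.cos θ / (3 * Real.sin θ ^ 2) - (shat - alpha * rhat) / 6) * t ^ 3
        - (alpha / 3) * Real.sin θ * c ^ 3 + d0 + d1 * t := by
    intro d0 d1 t c hc hEq
    rw [hψ]; simp only; rw [hEq, r32aux c hc]
  -- N-free values at the endpoints (d0 = d1 = 0)
  have hSm0 : ψ 0 0 tm = sS * tm ^ 2
      + ((sS * x - 2) * (1 - k1 ^ 2 + k2 ^ 2) * ((1 + (k1 + k2) ^ 2) * (1 + (k1 - k2) ^ 2))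
          / (24 * k1 ^ 2 * k2 ^ 2 * (1 + (k1 - k2) ^ 2))
        - (2 * x * sS + 2 - (1 + (k1 + k2) ^ 2) * (1 + (k1 - k2) ^ 2) * (sS * x - 2)
            / (2 * k2 ^ 2 * (1 + (k1 - k2) ^ 2))) / 6) * tm ^ 3
      + k1 * (sS * x - 2) / (3 * ((1 + (k1 - k2) ^ 2) * k2 ^ 2))
        * ((1 + (k1 + k2) ^ 2 - x * (1 + (k1 - k2) ^ 2)) / (-(2 * k1) * x)) ^ 3 := by
    rw [hval 0 0 tm _ hcm0 hEm, hshat, hrhat, halpha, hcos, hsin, ← hNN]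
    field_simp
    ring
  have hSp0 : ψ 0 0 tp = sS * tp ^ 2
      + ((sS * x - 2) * (1 - k1 ^ 2 + k2 ^ 2) * ((1 + (k1 + k2) ^ 2) * (1 + (k1 - k2) ^ 2))
          / (24 * k1 ^ 2 * k2 ^ 2 * (1 + (k1 - k2) ^ 2))
        - (2 * x * sS + 2 - (1 + (k1 + k2) ^ 2) * (1 + (k1 - k2) ^ 2) * (sS * x - 2)
            / (2 * k2 ^ 2 * (1 + (k1 - k2) ^ 2))) / 6) * tp ^ 3
      + k1 * (sS * x - 2) / (3 * ((1 + (k1 - k2) ^ 2) * k2 ^ 2))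
        * ((1 + (k1 + k2) ^ 2 + x * (1 + (k1 - k2) ^ 2)) / (-(2 * k1) * x)) ^ 3 := by
    rw [hval 0 0 tp _ hcp0 hEp, hshat, hrhat, halpha, hcos, hsin, ← hNN]
    field_simp
    ring
  -- single-fraction values at the endpoints (d0 = d1 = 0)
  have hSm : ψ 0 0 tm = (12 * k1 ^ 2 * k2 + 24 * k1 ^ 2 * k2 ^ 3 + 12 * k1 ^ 2 * k2 ^ 5 + 24 * k1 ^ 3 * k2 ^ 2 + 24 * k1 ^ 3 * k2 ^ 4 + 24 * k1 ^ 4 * k2 + 56 * k1 ^ 4 * k2 ^ 3 + 24 * k1 ^ 5 * k2 ^ 2 + 12 * k1 ^ 6 * k2 - 12 * x * k1 ^ 2 * k2 - 6 * x * k1 ^ 2 * k2 * sS - 24 * x * k1 ^ 2 * k2 ^ 3 - 12 * x * k1 ^ 2 * k2 ^ 3 * sS - 12 * x * k1 ^ 2 * k2 ^ 5 - 6 * x * k1 ^ 2 * k2 ^ 5 * sS + 24 * x * k1 ^ 3 * k2 ^ 2 + 24 * x * k1 ^ 3 * k2 ^ 4 - 24 * x * k1 ^ 4 * k2 - 12 *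 x * k1 ^ 4 * k2 * sS - 24 * x * k1 ^ 4 * k2 ^ 3 - 52 * x * k1 ^ 4 * k2 ^ 3 * sS + 24 * x * k1 ^ 5 * k2 ^ 2 - 12 * x * k1 ^ 6 * k2 - 6 * x * k1 ^ 6 * k2 * sS - 12 * x ^ 2 * k1 ^ 2 * k2 + 6 * x ^ 2 * k1 ^ 2 * k2 * sS - 24 * x ^ 2 * k1 ^ 2 * k2 ^ 3 + 12 * x ^ 2 * k1 ^ 2 * k2 ^ 3 * sS - 12 * x ^ 2 * k1 ^ 2 * k2 ^ 5 + 6 * x ^ 2 * k1 ^ 2 * k2 ^ 5 * sS - 24 * x ^ 2 * k1 ^ 3 * k2 ^ 2 - 24 * x ^ 2 * k1 ^ 3 * k2 ^ 2 * sS - 24 * x ^ 2 * k1 ^ 3 * k2 ^ 4 - 24 * x ^ 2 * k1 ^ 3 * k2 ^ 4 * sS - 24 * x ^ 2 * k1 ^ 4 * k2 + 12 * x ^ 2 * k1 ^ 4 * k2 * sS + 72 * x ^ 2 * k1 ^ 4 * k2 ^ 3 + 36 * x ^ 2 * k1 ^ 4 * k2 ^ 3 * sS - 24 * x ^ 2 *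 k1 ^ 5 * k2 ^ 2 - 24 * x ^ 2 * k1 ^ 5 * k2 ^ 2 * sS - 12 * x ^ 2 * k1 ^ 6 * k2 + 6 * x ^ 2 * k1 ^ 6 * k2 * sS + 12 * x ^ 3 * k1 ^ 2 * k2 + 6 * x ^ 3 * k1 ^ 2 * k2 * sS + 24 * x ^ 3 * k1 ^ 2 * k2 ^ 3 + 12 * x ^ 3 * k1 ^ 2 * k2 ^ 3 * sS + 12 * x ^ 3 * k1 ^ 2 * k2 ^ 5 + 6 * x ^ 3 * k1 ^ 2 * k2 ^ 5 * sS - 24 * x ^ 3 * k1 ^ 3 * k2 ^ 2 - 24 * x ^ 3 * k1 ^ 3 * k2 ^ 4 + 24 * x ^ 3 * k1 ^ 4 * k2 + 12 * x ^ 3 * k1 ^ 4 * k2 * sS + 24 * x ^ 3 * k1 ^ 4 * k2 ^ 3 - 12 * x ^ 3 * k1 ^ 4 * k2 ^ 3 * sS - 24 * x ^ 3 * k1 ^ 5 * k2 ^ 2 + 12 * x ^ 3 * k1 ^ 6 * k2 + 6 * x ^ 3 * k1 ^ 6 * k2 * sS - 6 * x ^ 4 * k1 ^ 2 * k2 * sS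 - 12 * x ^ 4 * k1 ^ 2 * k2 ^ 3 * sS - 6 * x ^ 4 * k1 ^ 2 * k2 ^ 5 * sS + 24 * x ^ 4 * k1 ^ 3 * k2 ^ 2 * sS + 24 * x ^ 4 * k1 ^ 3 * k2 ^ 4 * sS - 12 * x ^ 4 * k1 ^ 4 * k2 * sS - 36 * x ^ 4 * k1 ^ 4 * k2 ^ 3 * sS + 24 * x ^ 4 * k1 ^ 5 * k2 ^ 2 * sS - 6 * x ^ 4 * k1 ^ 6 * k2 * sS) / (24 * k1 ^ 3 * k2 ^ 2 * (1 + (k1 - k2) ^ 2) * x ^ 3) := by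
    rw [hSm0, htm]
    field_simp [hxne, hk1ne, hk2, hL2.ne']
    ring
  have hSp : ψ 0 0 tp = (12 * k1 ^ 2 * k2 + 24 * k1 ^ 2 * k2 ^ 3 + 12 * k1 ^ 2 * k2 ^ 5 + 24 * k1 ^ 3 * k2 ^ 2 + 24 * k1 ^ 3 * k2 ^ 4 + 24 * k1 ^ 4 * k2 + 56 * k1 ^ 4 * k2 ^ 3 + 24 * k1 ^ 5 * k2 ^ 2 + 12 * k1 ^ 6 * k2 + 12 * x * k1 ^ 2 * k2 - 6 * x * k1 ^ 2 * k2 * sS + 24 * x * k1 ^ 2 * k2 ^ 3 - 12 * x * k1 ^ 2 * k2 ^ 3 * sS + 12 * x * k1 ^ 2 * k2 ^ 5 - 6 * x * k1 ^ 2 * k2 ^ 5 * sS - 24 * x * k1 ^ 3 * k2 ^ 2 - 24 * x * k1 ^ 3 * k2 ^ 4 + 24 * x * k1 ^ 4 * k2 - 12 * x * k1 ^ 4 * k2 * sS + 24 * x * k1 ^ 4 * k2 ^ 3 - 52 * x * k1 ^ 4 * k2 ^ 3 * sS - 24 * x * k1 ^ 5 * k2 ^ 2 + 12 * x * k1 ^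 6 * k2 - 6 * x * k1 ^ 6 * k2 * sS - 12 * x ^ 2 * k1 ^ 2 * k2 - 6 * x ^ 2 * k1 ^ 2 * k2 * sS - 24 * x ^ 2 * k1 ^ 2 * k2 ^ 3 - 12 * x ^ 2 * k1 ^ 2 * k2 ^ 3 * sS - 12 * x ^ 2 * k1 ^ 2 * k2 ^ 5 - 6 * x ^ 2 * k1 ^ 2 * k2 ^ 5 * sS - 24 * x ^ 2 * k1 ^ 3 * k2 ^ 2 + 24 * x ^ 2 * k1 ^ 3 * k2 ^ 2 * sS - 24 * x ^ 2 * k1 ^ 3 * k2 ^ 4 + 24 * x ^ 2 * k1 ^ 3 * k2 ^ 4 * sS - 24 * x ^ 2 * k1 ^ 4 * k2 - 12 * x ^ 2 * k1 ^ 4 * k2 * sS + 72 * x ^ 2 * k1 ^ 4 * k2 ^ 3 - 36 * x ^ 2 * k1 ^ 4 * k2 ^ 3 * sS - 24 * x ^ 2 * k1 ^ 5 * k2 ^ 2 + 24 * x ^ 2 * k1 ^ 5 * k2 ^ 2 * sS - 12 * x ^ 2 * k1 ^ 6 * k2 - 6 * x ^ 2 * k1 ^ 6 * k2 * sS - 12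 * x ^ 3 * k1 ^ 2 * k2 + 6 * x ^ 3 * k1 ^ 2 * k2 * sS - 24 * x ^ 3 * k1 ^ 2 * k2 ^ 3 + 12 * x ^ 3 * k1 ^ 2 * k2 ^ 3 * sS - 12 * x ^ 3 * k1 ^ 2 * k2 ^ 5 + 6 * x ^ 3 * k1 ^ 2 * k2 ^ 5 * sS + 24 * x ^ 3 * k1 ^ 3 * k2 ^ 2 + 24 * x ^ 3 * k1 ^ 3 * k2 ^ 4 - 24 * x ^ 3 * k1 ^ 4 * k2 + 12 * x ^ 3 * k1 ^ 4 * k2 * sS - 24 * x ^ 3 * k1 ^ 4 * k2 ^ 3 - 12 * x ^ 3 * k1 ^ 4 * k2 ^ 3 * sS + 24 * x ^ 3 * k1 ^ 5 * k2 ^ 2 - 12 * x ^ 3 * k1 ^ 6 * k2 + 6 * x ^ 3 * k1 ^ 6 * k2 * sS + 6 * x ^ 4 * k1 ^ 2 * k2 * sS + 12 * x ^ 4 * k1 ^ 2 * k2 ^ 3 * sS + 6 * x ^ 4 * k1 ^ 2 * k2 ^ 5 * sS - 24 * x ^ 4 * k1 ^ 3 * k2 ^ 2 * sS - 24 * x ^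 4 * k1 ^ 3 * k2 ^ 4 * sS + 12 * x ^ 4 * k1 ^ 4 * k2 * sS + 36 * x ^ 4 * k1 ^ 4 * k2 ^ 3 * sS - 24 * x ^ 4 * k1 ^ 5 * k2 ^ 2 * sS + 6 * x ^ 4 * k1 ^ 6 * k2 * sS) / (24 * k1 ^ 3 * k2 ^ 2 * (1 + (k1 - k2) ^ 2) * x ^ 3) := by
    rw [hSp0, htp]
    field_simp [hxne, hk1ne, hk2, hL2.ne']
    ring
  -- splitting
  have hsplit : ∀ d0 d1 t : ℝ, ψ d0 d1 t = ψ 0 0 t + d0 + d1 * t := by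
    intro d0 d1 t; rw [hψ]; simp only; ring
  have h2x : tp - tm = 2 := by rw [htp, htm]; field_simp; ring
  -- solving the linear system
  have hsolve : ∀ e0 e1 : ℝ, ψ e0 e1 tm = 0 → ψ e0 e1 tp = 0 →
      e1 = (ψ 0 0 tm - ψ 0 0 tp) / 2 ∧ e0 = -(ψ 0 0 tm) - (ψ 0 0 tm - ψ 0 0 tp) / 2 * tm := by
    intro e0 e1 h1 h2
    rw [hsplit] at h1 h2
    have key : e1 * (tp - tm) = ψ 0 0 tm - ψ 0 0 tp := by linear_combination h2 - h1
    rw [h2x] at key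
    have he1 : e1 = (ψ 0 0 tm - ψ 0 0 tp) / 2 := by rw [← key]; ring
    refine ⟨he1, ?_⟩
    rw [he1] at h1
    linear_combination h1
  -- derivative lemma
  have hder : ∀ d0 d1 t c : ℝ, 0 ≤ c → (Real.cot θ ^ 2 + 1) * (t ^ 2 + C) = c ^ 2 →
      deriv (ψ d0 d1) t = 2 * sS * t
        + 3 * (alpha * Real.cos θ / (3 * Real.sin θ ^ 2) - (shat - alpha * rhat) / 6) * t ^ 2
        - alpha * Real.sin θ * (Real.cot θ ^ 2 + 1) * t * c + d1 := by
    intro d0 d1 t c hc hEq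
    have h1 : HasDerivAt (fun s : ℝ => (Real.cot θ ^ 2 + 1) * (s ^ 2 + C))
        ((Real.cot θ ^ 2 + 1) * (2 * t)) t := by
      simpa using ((hasDerivAt_pow 2 t).add_const C).const_mul (Real.cot θ ^ 2 + 1)
    have h2 := h1.rpow_const (p := (3:ℝ)/2) (Or.inr (by norm_num))
    have hb : HasDerivAt (ψ d0 d1) (2 * sS * t
        + 3 * (alpha * Real.cos θ / (3 * Real.sin θ ^ 2) - (shat - alpha * rhat) / 6) * t ^ 2
        - alpha * Real.sin θ * (Real.cot θ ^ 2 + 1) * t * c + d1) t := by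
      rw [hψ]
      have hbig := ((((hasDerivAt_pow 2 t).const_mul sS).add
          ((hasDerivAt_pow 3 t).const_mul
            (alpha * Real.cos θ / (3 * Real.sin θ ^ 2) - (shat - alpha * rhat) / 6))).sub
          (h2.const_mul (alpha / 3 * Real.sin θ))).add_const d0 |>.add
          ((hasDerivAt_id t).const_mul d1)
      refine hbig.congr_deriv ?_
      rw [hEq, r12aux c hc]
      push_cast
      ring
    exact hb.deriv
  have hcotne : Real.cot θ ^ 2 + 1 ≠ 0 := by rw [hK]; positivity
  -- N-free derivative values
  have hDm0 : ∀ d0 d1 : ℝ, deriv (ψ d0 d1) tm = 2 * sS * tm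
      + 3 * ((sS * x - 2) * (1 - k1 ^ 2 + k2 ^ 2) * ((1 + (k1 + k2) ^ 2) * (1 + (k1 - k2) ^ 2))
          / (24 * k1 ^ 2 * k2 ^ 2 * (1 + (k1 - k2) ^ 2))
        - (2 * x * sS + 2 - (1 + (k1 + k2) ^ 2) * (1 + (k1 - k2) ^ 2) * (sS * x - 2)
            / (2 * k2 ^ 2 * (1 + (k1 - k2) ^ 2))) / 6) * tm ^ 2
      + k1 * (sS * x - 2) / ((1 + (k1 - k2) ^ 2) * k2 ^ 2)
        * ((1 + (k1 + k2) ^ 2) * (1 + (k1 - k2) ^ 2) / (4 * k1 ^ 2)) * tm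
        * ((1 + (k1 + k2) ^ 2 - x * (1 + (k1 - k2) ^ 2)) / (-(2 * k1) * x)) + d1 := by
    intro d0 d1
    rw [hder d0 d1 tm _ hcm0 hEm, hshat, hrhat, halpha, hcos, hsin, hK, ← hNN]
    field_simp
    ring
  have hDp0 : ∀ d0 d1 : ℝ, deriv (ψ d0 d1) tp = 2 * sS * tp
      + 3 * ((sS * x - 2) * (1 - k1 ^ 2 + k2 ^ 2) * ((1 + (k1 + k2) ^ 2) * (1 + (k1 - k2) ^ 2))
          / (24 * k1 ^ 2 * k2 ^ 2 * (1 + (k1 - k2) ^ 2))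
        - (2 * x * sS + 2 - (1 + (k1 + k2) ^ 2) * (1 + (k1 - k2) ^ 2) * (sS * x - 2)
            / (2 * k2 ^ 2 * (1 + (k1 - k2) ^ 2))) / 6) * tp ^ 2
      + k1 * (sS * x - 2) / ((1 + (k1 - k2) ^ 2) * k2 ^ 2)
        * ((1 + (k1 + k2) ^ 2) * (1 + (k1 - k2) ^ 2) / (4 * k1 ^ 2)) * tp
        * ((1 + (k1 + k2) ^ 2 + x * (1 + (k1 - k2) ^ 2)) / (-(2 * k1) * x)) + d1 := by
    intro d0 d1
    rw [hder d0 d1 tp _ hcp0 hEp, hshat, hrhat, halpha, hcos, hsin, hK, ← hNN]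
    field_simp
    ring
  have hDm : ∀ d0 d1 : ℝ, deriv (ψ d0 d1) tm
      = (12 * x * k1 ^ 2 * k2 + 24 * x * k1 ^ 2 * k2 ^ 3 + 12 * x * k1 ^ 2 * k2 ^ 5 - 24 * x * k1 ^ 3 * k2 ^ 2 - 24 * x * k1 ^ 3 * k2 ^ 4 + 24 * x * k1 ^ 4 * k2 + 24 * x * k1 ^ 4 * k2 ^ 3 - 24 * x * k1 ^ 5 * k2 ^ 2 + 12 * x * k1 ^ 6 * k2 - 6 * x ^ 2 * k1 ^ 2 * k2 * sS - 12 * x ^ 2 * k1 ^ 2 * k2 ^ 3 * sS - 6 * x ^ 2 * k1 ^ 2 * k2 ^ 5 * sS + 48 * x ^ 2 * k1 ^ 3 * k2 ^ 2 + 24 * x ^ 2 * k1 ^ 3 * k2 ^ 2 * sS + 48 * x ^ 2 * k1 ^ 3 * k2 ^ 4 + 24 * x ^ 2 * k1 ^ 3 * k2 ^ 4 * sS - 12 * x ^ 2 * k1 ^ 4 * k2 * sS - 96 * x ^ 2 * k1 ^ 4 * k2 ^ 3 - 36 * x ^ 2 * k1 ^ 4 * k2 ^ 3 * sS + 48 *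 x ^ 2 * k1 ^ 5 * k2 ^ 2 + 24 * x ^ 2 * k1 ^ 5 * k2 ^ 2 * sS - 6 * x ^ 2 * k1 ^ 6 * k2 * sS - 12 * x ^ 3 * k1 ^ 2 * k2 - 24 * x ^ 3 * k1 ^ 2 * k2 ^ 3 - 12 * x ^ 3 * k1 ^ 2 * k2 ^ 5 - 24 * x ^ 3 * k1 ^ 3 * k2 ^ 2 - 24 * x ^ 3 * k1 ^ 3 * k2 ^ 4 - 24 * x ^ 3 * k1 ^ 4 * k2 + 72 * x ^ 3 * k1 ^ 4 * k2 ^ 3 - 24 * x ^ 3 * k1 ^ 5 * k2 ^ 2 - 12 * x ^ 3 * k1 ^ 6 * k2 + 6 * x ^ 4 * k1 ^ 2 * k2 * sS + 12 * x ^ 4 * k1 ^ 2 * k2 ^ 3 * sS + 6 * x ^ 4 * k1 ^ 2 * k2 ^ 5 * sS - 24 * x ^ 4 * k1 ^ 3 * k2 ^ 2 * sS - 24 * x ^ 4 * k1 ^ 3 * k2 ^ 4 * sS + 12 * x ^ 4 * k1 ^ 4 * k2 * sS + 36 * x ^ 4 * k1 ^ 4 * k2 ^ 3 * sS - 24 *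 x ^ 4 * k1 ^ 5 * k2 ^ 2 * sS + 6 * x ^ 4 * k1 ^ 6 * k2 * sS) / (24 * k1 ^ 3 * k2 ^ 2 * (1 + (k1 - k2) ^ 2) * x ^ 3) + d1 := by
    intro d0 d1
    rw [hDm0 d0 d1, htm]
    field_simp [hxne, hk1ne, hk2, hL2.ne']
    ring
  have hDp : ∀ d0 d1 : ℝ, deriv (ψ d0 d1) tp
      = (12 * x * k1 ^ 2 * k2 + 24 * x * k1 ^ 2 * k2 ^ 3 + 12 * x * k1 ^ 2 * k2 ^ 5 - 24 * x * k1 ^ 3 * k2 ^ 2 - 24 * x * k1 ^ 3 * k2 ^ 4 + 24 * x * k1 ^ 4 * k2 + 24 * x * k1 ^ 4 * k2 ^ 3 - 24 * x * k1 ^ 5 * k2 ^ 2 + 12 * x * k1 ^ 6 * k2 - 6 * x ^ 2 * k1 ^ 2 * k2 * sS - 12 * x ^ 2 * k1 ^ 2 * k2 ^ 3 * sS - 6 * x ^ 2 * k1 ^ 2 * k2 ^ 5 * sS - 48 * x ^ 2 * k1 ^ 3 * k2 ^ 2 + 24 * x ^ 2 * k1 ^ 3 * k2 ^ 2 * sS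 - 48 * x ^ 2 * k1 ^ 3 * k2 ^ 4 + 24 * x ^ 2 * k1 ^ 3 * k2 ^ 4 * sS - 12 * x ^ 2 * k1 ^ 4 * k2 * sS + 96 * x ^ 2 * k1 ^ 4 * k2 ^ 3 - 36 * x ^ 2 * k1 ^ 4 * k2 ^ 3 * sS - 48 * x ^ 2 * k1 ^ 5 * k2 ^ 2 + 24 * x ^ 2 * k1 ^ 5 * k2 ^ 2 * sS - 6 * x ^ 2 * k1 ^ 6 * k2 * sS - 12 * x ^ 3 * k1 ^ 2 * k2 - 24 * x ^ 3 * k1 ^ 2 * k2 ^ 3 - 12 * x ^ 3 * k1 ^ 2 * k2 ^ 5 - 24 * x ^ 3 * k1 ^ 3 * k2 ^ 2 - 24 * x ^ 3 * k1 ^ 3 * k2 ^ 4 - 24 * x ^ 3 * k1 ^ 4 * k2 + 72 * x ^ 3 * k1 ^ 4 * k2 ^ 3 - 24 * x ^ 3 * k1 ^ 5 * k2 ^ 2 - 12 * x ^ 3 * k1 ^ 6 * k2 + 6 * x ^ 4 * k1 ^ 2 * k2 * sS + 12 * x ^ 4 * k1 ^ 2 * k2 ^ 3 * sS + 6 * x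 ^ 4 * k1 ^ 2 * k2 ^ 5 * sS - 24 * x ^ 4 * k1 ^ 3 * k2 ^ 2 * sS - 24 * x ^ 4 * k1 ^ 3 * k2 ^ 4 * sS + 12 * x ^ 4 * k1 ^ 4 * k2 * sS + 36 * x ^ 4 * k1 ^ 4 * k2 ^ 3 * sS - 24 * x ^ 4 * k1 ^ 5 * k2 ^ 2 * sS + 6 * x ^ 4 * k1 ^ 6 * k2 * sS) / (24 * k1 ^ 3 * k2 ^ 2 * (1 + (k1 - k2) ^ 2) * x ^ 3) + d1 := by
    intro d0 d1
    rw [hDp0 d0 d1, htp]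
    field_simp [hxne, hk1ne, hk2, hL2.ne']
    ring
  constructor
  · -- existence and uniqueness
    refine ⟨⟨-(ψ 0 0 tm) - (ψ 0 0 tm - ψ 0 0 tp) / 2 * tm, (ψ 0 0 tm - ψ 0 0 tp) / 2⟩,
      ⟨?_, ?_⟩, ?_⟩
    · rw [hsplit]; ring
    · rw [hsplit]
      have : tp = tm + 2 := by linarith [h2x]
      rw [this]; ring
    · rintro ⟨e0, e1⟩ ⟨h1, h2⟩
      obtain ⟨he1, he0⟩ := hsolve e0 e1 h1 h2
      simp only [Prod.mk.injEq]
      exact ⟨he0, he1⟩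
  · intro d0 d1 hm hp
    obtain ⟨hd1, _⟩ := hsolve d0 d1 hm hp
    constructor
    · rw [hDm d0 d1, hd1, hSm, hSp, htm]
      field_simp [hxne, hk1ne, hk2, hL2.ne']
      ring
    · rw [hDp d0 d1, hd1, hSm, hSp, htp]
      field_simp [hxne, hk1ne, hk2, hL2.ne']
      ring
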